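/- Let n ≥ 2 and let R = {e_i − e_j : 1 ≤ i, j ≤ n, i ≠ j} ⊂ ℝⁿ be the root system of type A_{n−1}. Then Γ = {e_i − e_{n+1−i} : 1 ≤ i ≤ ⌊n/2⌋} is a strongly orthogonal subset of R with ⌊n/2⌋ elements, and every strongly orthogonal subset of R has at most ⌊n/2⌋ elements. -/

import Mathlib

/-- A subset `S` of a set `R` of vectors is *strongly orthogonal* (relative to
`R`) if `S ⊆ R` and for all distinct `α, β ∈ S` one has `α ≠ -β`,
`α + β ∉ R` and `α - β ∉ R`. -/
def IsStronglyOrthSubset {V : Type*} [AddCommGroup V] (R S : Set V) : Prop :=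
  S ⊆ R ∧ S.Pairwise fun α β => α ≠ -β ∧ α + β ∉ R ∧ α - β ∉ R

/-- The `i`-th standard basis vector of `ℝⁿ`, in 1-based indexing:
`stdVec n i` has a `1` in position `i` (for `1 ≤ i ≤ n`) and `0` elsewhere. -/
noncomputable def stdVec (n : ℕ) (i : ℕ) : EuclideanSpace ℝ (Fin n) :=
  (WithLp.equiv 2 (Fin n → ℝ)).symm fun j => if (j : ℕ) + 1 = i then 1 else 0

lemma root_apply (n i j m : ℕ) (hm : m < n) :
    (stdVec n i - stdVec n j) ⟨m, hm⟩ =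
      (if m + 1 = i then (1:ℝ) else 0) - (if m + 1 = j then 1 else 0) := rfl

lemma root_sum_apply (n i j k l m : ℕ) (hm : m < n) :
    (stdVec n i - stdVec n j + (stdVec n k - stdVec n l)) ⟨m, hm⟩ =
      (if m + 1 = i then (1:ℝ) else 0) - (if m + 1 = j then 1 else 0) +
        ((if m + 1 = k then (1:ℝ) else 0) - (if m + 1 = l then 1 else 0)) := rfl

lemma root_inj {n i j k l : ℕ} (hi : 1 ≤ i) (hi' : i ≤ n) (hj : 1 ≤ j) (hj' : j ≤ n)
    (hij : i ≠ j) (hkl : k ≠ l)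
    (h : stdVec n i - stdVec n j = stdVec n k - stdVec n l) : i = k ∧ j = l := by
  have h1 : (stdVec n i - stdVec n j) ⟨i - 1, by omega⟩ =
      (stdVec n k - stdVec n l) ⟨i - 1, by omega⟩ := by rw [h]
  have h2 : (stdVec n i - stdVec n j) ⟨j - 1, by omega⟩ =
      (stdVec n k - stdVec n l) ⟨j - 1, by omega⟩ := by rw [h]
  rw [root_apply, root_apply] at h1 h2
  constructor
  · split_ifs at h1 <;> first | omega | norm_num at h1
  · split_ifs at h2 <;> first | omega | norm_num at h2

lemma sum_ne_root {n i j k l p q : ℕ} (hi : 1 ≤ i) (hi' : i ≤ n) (hk : 1 ≤ k) (hk' : k ≤ n)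
    (hik : i ≠ k) (hij : i ≠ j) (hil : i ≠ l) (hkj : k ≠ j) (hkl : k ≠ l) :
    stdVec n i - stdVec n j + (stdVec n k - stdVec n l) ≠ stdVec n p - stdVec n q := by
  intro h
  have h1 : (stdVec n i - stdVec n j + (stdVec n k - stdVec n l)) ⟨i - 1, by omega⟩ =
      (stdVec n p - stdVec n q) ⟨i - 1, by omega⟩ := by rw [h]
  have h2 : (stdVec n i - stdVec n j + (stdVec n k - stdVec n l)) ⟨k - 1, by omega⟩ =
      (stdVec n p - stdVec n q) ⟨k - 1, by omega⟩ := by rw [h]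
  rw [root_sum_apply, root_apply] at h1
  rw [root_sum_apply, root_apply] at h2
  have hp1 : i = p := by split_ifs at h1 <;> first | omega | norm_num at h1
  have hp2 : k = p := by split_ifs at h2 <;> first | omega | norm_num at h2
  omega

/-- The support of a vector, as a finset. -/
noncomputable def Supp {n : ℕ} (x : EuclideanSpace ℝ (Fin n)) : Finset (Fin n) :=
  @Finset.filter _ (fun k => x k ≠ 0) (Classical.decPred _) Finset.univ

lemma supp_root {n i j : ℕ} (hi : 1 ≤ i) (hi' : i ≤ n) (hj : 1 ≤ j) (hj' : j ≤ n)
    (hij : i ≠ j) :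
    Supp (stdVec n i - stdVec n j) = {⟨i - 1, by omega⟩, ⟨j - 1, by omega⟩} := by
  ext k
  obtain ⟨m, hm⟩ := k
  rw [Supp]
  simp only [Finset.mem_filter, Finset.mem_univ, true_and, Finset.mem_insert,
    Finset.mem_singleton, Fin.mk.injEq, root_apply]
  split_ifs <;> norm_num <;> omega

theorem typeA_max_strongly_orthogonal (n : ℕ) (hn : 2 ≤ n)
    (R : Set (EuclideanSpace ℝ (Fin n)))
    (hR : R = {x | ∃ i j : ℕ, 1 ≤ i ∧ i ≤ n ∧ 1 ≤ j ∧ j ≤ n ∧ i ≠ j ∧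
      x = stdVec n i - stdVec n j})
    (Γ : Set (EuclideanSpace ℝ (Fin n)))
    (hΓ : Γ = {x | ∃ i : ℕ, 1 ≤ i ∧ i ≤ n / 2 ∧
      x = stdVec n i - stdVec n (n + 1 - i)}) :
    IsStronglyOrthSubset R Γ ∧ Γ.ncard = n / 2 ∧
      ∀ S : Set (EuclideanSpace ℝ (Fin n)),
        IsStronglyOrthSubset R S → S.ncard ≤ n / 2 := by
  classical
  subst hR hΓ
  refine ⟨⟨?_, ?_⟩, ?_, ?_⟩
  · -- Γ ⊆ R
    rintro x ⟨i, hi1, hi2, rfl⟩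
    exact ⟨i, n + 1 - i, hi1, by omega, by omega, by omega, by omega, rfl⟩
  · -- pairwise strongly orthogonal
    rintro x ⟨i, hi1, hi2, rfl⟩ y ⟨j, hj1, hj2, rfl⟩ hxy
    have hij : i ≠ j := by rintro rfl; exact hxy rfl
    refine ⟨?_, ?_, ?_⟩
    · rw [neg_sub]
      intro h
      obtain ⟨h1, h2⟩ := root_inj hi1 (by omega) (by omega) (by omega) (by omega) (by omega) h
      omega
    · rintro ⟨p, q, hp1, hp2, hq1, hq2, hpq, hx⟩
      exact sum_ne_root hi1 (by omega) hj1 (by omega) hij (by omega) (by omega) (by omega)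
        (by omega) hx
    · rw [sub_eq_add_neg, neg_sub]
      rintro ⟨p, q, hp1, hp2, hq1, hq2, hpq, hx⟩
      exact sum_ne_root hi1 (by omega) (by omega : 1 ≤ n + 1 - j) (by omega) (by omega)
        (by omega) hij (by omega) (by omega) hx
  · -- cardinality of Γ
    have hΓeq : {x | ∃ i : ℕ, 1 ≤ i ∧ i ≤ n / 2 ∧
        x = stdVec n i - stdVec n (n + 1 - i)} =
        ↑((Finset.Icc 1 (n / 2)).image fun i => stdVec n i - stdVec n (n + 1 - i)) := by
      ext x
      simp only [Set.mem_setOf_eq, Finset.coe_image, Set.mem_image, Finset.mem_coe,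
        Finset.mem_Icc]
      constructor
      · rintro ⟨i, h1, h2, rfl⟩; exact ⟨i, ⟨h1, h2⟩, rfl⟩
      · rintro ⟨i, ⟨h1, h2⟩, rfl⟩; exact ⟨i, h1, h2, rfl⟩
    rw [hΓeq, Set.ncard_coe_finset, Finset.card_image_of_injOn, Nat.card_Icc]
    · omega
    · intro a ha b hb h
      simp only [Finset.coe_Icc, Set.mem_Icc] at ha hb
      have := root_inj ha.1 (by omega) (by omega : 1 ≤ n + 1 - a) (by omega) (by omega)
        (by omega) h
      omega
  · -- upper bound
    rintro S ⟨hSR, hSP⟩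
    have hfin : S.Finite := by
      apply Set.Finite.subset (Set.Finite.image
        (fun p : ℕ × ℕ => stdVec n p.1 - stdVec n p.2) (Set.finite_Icc (1, 1) (n, n)))
      intro x hx
      obtain ⟨i, j, hi1, hi2, hj1, hj2, hij, rfl⟩ := hSR hx
      exact ⟨(i, j), by simp [Set.mem_Icc, Prod.le_def, hi1, hi2, hj1, hj2], rfl⟩
    rw [Set.ncard_eq_toFinset_card _ hfin]
    set T := hfin.toFinset with hT
    have hmem : ∀ x ∈ T, x ∈ S := fun x hx => by rwa [hT, Set.Finite.mem_toFinset] at hx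
    -- distinct elements have disjoint index sets
    have hdisj : ∀ x ∈ T, ∀ y ∈ T, x ≠ y → Disjoint (Supp x) (Supp y) := by
      intro x hx y hy hxy
      obtain ⟨hneg, hsum, hdiff⟩ := hSP (hmem x hx) (hmem y hy) hxy
      obtain ⟨i, j, hi1, hi2, hj1, hj2, hij, rfl⟩ := hSR (hmem x hx)
      obtain ⟨k, l, hk1, hk2, hl1, hl2, hkl, rfl⟩ := hSR (hmem y hy)
      have hik : i ≠ k := by
        rintro rfl
        have hjl : j ≠ l := by rintro rfl; exact hxy rfl
        exact hdiff ⟨l, j, hl1, hl2, hj1, hj2, fun h => hjl h.symm, by abel⟩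
      have hjl : j ≠ l := by
        rintro rfl
        exact hdiff ⟨i, k, hi1, hi2, hk1, hk2, hik, by abel⟩
      have hil : i ≠ l := by
        rintro rfl
        by_cases hjk : j = k
        · subst hjk
          exact hneg (by rw [neg_sub])
        · exact hsum ⟨k, j, hk1, hk2, hj1, hj2, fun h => hjk h.symm, by abel⟩
      have hjk : j ≠ k := by
        rintro rfl
        exact hsum ⟨i, l, hi1, hi2, hl1, hl2, hil, by abel⟩
      rw [supp_root hi1 hi2 hj1 hj2 hij, supp_root hk1 hk2 hl1 hl2 hkl]
      rw [Finset.disjoint_left]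
      intro a ha hb
      simp only [Finset.mem_insert, Finset.mem_singleton, Fin.ext_iff] at ha hb
      omega
    have hcard2 : ∀ x ∈ T, (Supp x).card = 2 := by
      intro x hx
      obtain ⟨i, j, hi1, hi2, hj1, hj2, hij, rfl⟩ := hSR (hmem x hx)
      rw [supp_root hi1 hi2 hj1 hj2 hij]
      rw [Finset.card_insert_of_notMem (by simp [Fin.ext_iff]; omega), Finset.card_singleton]
    have hbig := Finset.card_biUnion hdisj
    have hle : (T.biUnion Supp).card ≤ n := by
      calc (T.biUnion Supp).card ≤ Finset.univ.card := Finset.card_le_univ _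
        _ = n := by simp
    rw [hbig, Finset.sum_congr rfl hcard2, Finset.sum_const, smul_eq_mul] at hle
    omega
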